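/- Let r ≥ 2, t ≥ 3, and let G be a graph with two non-adjacent vertices u, v both of degree less than ⌈r/2⌉·(t−1). Then c_{r,S_t}(G + uv) ≥ c_{r,S_t}(G), where G + uv is obtained by adding the edge uv. -/

import Mathlib

open SimpleGraph Finset

/-- `G` contains a copy of `H`, i.e. a subgraph isomorphic to `H`. -/
def SimpleGraph.ContainsCopy {V W : Type*} (G : SimpleGraph V) (H : SimpleGraph W) : Prop :=
  ∃ f : H →g G, Function.Injective f

/-- The color class of color `i` in the `r`-edge-coloring `c` of `G`. -/
def colorClass {V : Type*} {r : ℕ} (G : SimpleGraph V) (c : G.edgeSet → Fin r) (i : Fin r) :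
    SimpleGraph V :=
  SimpleGraph.fromEdgeSet {e | ∃ h : e ∈ G.edgeSet, c ⟨e, h⟩ = i}

/-- The coloring `c` of `G` has a monochromatic copy of `H`. -/
def HasMonoCopy {V W : Type*} {r : ℕ} (G : SimpleGraph V) (H : SimpleGraph W)
    (c : G.edgeSet → Fin r) : Prop :=
  ∃ i : Fin r, (colorClass G c i).ContainsCopy H

/-- `c_{r,H}(G)`: the number of `r`-edge-colorings of `G` without a monochromatic copy of `H`. -/
noncomputable def goodCount {V W : Type*} (r : ℕ) (H : SimpleGraph W) (G : SimpleGraph V) : ℕ :=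
  Nat.card {c : G.edgeSet → Fin r // ¬ HasMonoCopy G H c}

/-- `c_{r,H}(n)`: the maximum of `c_{r,H}(G)` over all graphs `G` on `n` vertices. -/
noncomputable def cMax {W : Type*} (r : ℕ) (H : SimpleGraph W) (n : ℕ) : ℕ :=
  sSup {k | ∃ G : SimpleGraph (Fin n), goodCount r H G = k}

/-- `ex(n,H)`: the maximum number of edges of an `H`-free graph on `n` vertices. -/
noncomputable def exNum {W : Type*} (n : ℕ) (H : SimpleGraph W) : ℕ :=
  sSup {k | ∃ G : SimpleGraph (Fin n), ¬ G.ContainsCopy H ∧ G.edgeSet.ncard = k}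

/-- The star `S_t` with `t` edges: center `0` joined to `t` leaves. -/
def starGraph (t : ℕ) : SimpleGraph (Fin (t + 1)) where
  Adj u v := u ≠ v ∧ (u = 0 ∨ v = 0)
  symm := ⟨fun u v h => ⟨h.1.symm, h.2.symm⟩⟩
  loopless := ⟨fun u h => h.1 rfl⟩

set_option linter.unusedVariables false
set_option maxHeartbeats 1000000

lemma colorClass_adj {V : Type*} {r : ℕ} (G : SimpleGraph V) (c : G.edgeSet → Fin r) (i : Fin r)
    (x y : V) : (colorClass G c i).Adj x y ↔ ∃ h : G.Adj x y, c ⟨s(x,y), h⟩ = i := by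
  simp only [colorClass, SimpleGraph.fromEdgeSet_adj, Set.mem_setOf_eq, SimpleGraph.mem_edgeSet]
  constructor
  · rintro ⟨⟨h, hc⟩, -⟩; exact ⟨h, hc⟩
  · rintro ⟨h, hc⟩; exact ⟨⟨h, hc⟩, h.ne⟩


lemma contains_star_iff {V : Type*} [Finite V] (K : SimpleGraph V) (t : ℕ) :
    K.ContainsCopy (_root_.starGraph t) ↔ ∃ w : V, t ≤ (K.neighborSet w).ncard := by
  constructor
  · rintro ⟨f, hf⟩
    refine ⟨f 0, ?_⟩
    have hg : ∀ k : Fin t, f k.succ ∈ K.neighborSet (f 0) := by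
      intro k
      exact f.map_adj ⟨(Fin.succ_ne_zero k).symm, Or.inl rfl⟩
    let g : Fin t → K.neighborSet (f 0) := fun k => ⟨f k.succ, hg k⟩
    have hginj : Function.Injective g := by
      intro a b hab
      exact Fin.succ_injective _ (hf (congrArg Subtype.val hab))
    calc t = Nat.card (Fin t) := by simp
      _ ≤ Nat.card (K.neighborSet (f 0)) := Nat.card_le_card_of_injective g hginj
      _ = (K.neighborSet (f 0)).ncard := Nat.card_coe_set_eq _
  · rintro ⟨w, hw⟩
    classical
    have : Nonempty (Fin t ↪ K.neighborSet w) := by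
      have := Fintype.ofFinite V
      apply Function.Embedding.nonempty_of_card_le
      rw [Fintype.card_fin]
      rwa [← Nat.card_coe_set_eq, Nat.card_eq_fintype_card] at hw
    obtain ⟨g⟩ := this
    let F : Fin (t + 1) → V := fun a => Fin.cases w (fun k => (g k : V)) a
    have hF0 : F 0 = w := rfl
    have hFs : ∀ k : Fin t, F k.succ = (g k : V) := fun k => rfl
    have hAdj : ∀ k : Fin t, K.Adj w (g k) := fun k => (g k).2
    refine ⟨⟨F, ?_⟩, ?_⟩
    · rintro a b ⟨hab, h0 | h0⟩
      · subst h0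
        obtain ⟨k, rfl⟩ := Fin.exists_succ_eq.2 (Ne.symm hab)
        rw [hF0, hFs]; exact hAdj k
      · subst h0
        obtain ⟨k, rfl⟩ := Fin.exists_succ_eq.2 hab
        rw [hF0, hFs]; exact (hAdj k).symm
    · intro a b hab
      change F a = F b at hab
      induction a using Fin.cases with
      | zero =>
        induction b using Fin.cases with
        | zero => rfl
        | succ k =>
          rw [hF0, hFs] at hab
          exact absurd hab (hAdj k).ne
      | succ k =>
        induction b using Fin.cases with
        | zero =>
          rw [hF0, hFs] at hab
          exact absurd hab.symm (hAdj k).ne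
        | succ k' =>
          rw [hFs, hFs] at hab
          exact congrArg Fin.succ (g.injective (Subtype.ext hab))

theorem stmt6 {V : Type*} [Fintype V] (r t : ℕ) (hr : 2 ≤ r) (ht : 3 ≤ t)
    (G : SimpleGraph V) (u v : V) (hne : u ≠ v) (hnadj : ¬ G.Adj u v)
    (hu : (G.neighborSet u).ncard < ((r + 1) / 2) * (t - 1))
    (hv : (G.neighborSet v).ncard < ((r + 1) / 2) * (t - 1)) :
    goodCount r (_root_.starGraph t) G ≤
      goodCount r (_root_.starGraph t) (G ⊔ SimpleGraph.fromEdgeSet {s(u, v)}) := by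
  classical
  set G' := G ⊔ SimpleGraph.fromEdgeSet {s(u, v)} with hG'
  have hG'adj : ∀ x y : V, G'.Adj x y ↔ G.Adj x y ∨ s(x, y) = s(u, v) := by
    intro x y
    simp only [hG', SimpleGraph.sup_adj, SimpleGraph.fromEdgeSet_adj, Set.mem_singleton_iff]
    constructor
    · rintro (h | ⟨h, -⟩)
      · exact Or.inl h
      · exact Or.inr h
    · rintro (h | h)
      · exact Or.inl h
      · refine Or.inr ⟨h, ?_⟩
        rw [Sym2.eq_iff] at h
        rcases h with ⟨rfl, rfl⟩ | ⟨rfl, rfl⟩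
        · exact hne
        · exact hne.symm
  -- key extension lemma
  have key : ∀ c : G.edgeSet → Fin r, ¬ HasMonoCopy G (_root_.starGraph t) c →
      ∃ c' : G'.edgeSet → Fin r, ¬ HasMonoCopy G' (_root_.starGraph t) c' ∧
        ∀ (e : Sym2 V) (he : e ∈ G.edgeSet) (he' : e ∈ G'.edgeSet),
          c' ⟨e, he'⟩ = c ⟨e, he⟩ := by
    intro c hc
    -- degree bound in each color class from goodness
    have hgood : ∀ (j : Fin r) (w : V), ((colorClass G c j).neighborSet w).ncard ≤ t - 1 := by
      intro j w
      by_contra hcon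
      push_neg at hcon
      exact hc ⟨j, (contains_star_iff _ t).2 ⟨w, by omega⟩⟩
    set d : Fin r → V → ℕ := fun j w => ((colorClass G c j).neighborSet w).ncard with hd
    -- fiberwise decomposition of the neighborhood
    set col : V → V → Fin r := fun w x =>
      if h : G.Adj w x then c ⟨s(w, x), h⟩ else ⟨0, by omega⟩ with hcol
    have hNf : ∀ w : V, (G.neighborSet w).Finite := fun w => Set.toFinite _
    have hfiber : ∀ (j : Fin r) (w : V),
        (colorClass G c j).neighborSet w = ↑(((hNf w).toFinset).filter (fun x => col w x = j)) := by
      intro j w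
      ext x
      simp only [SimpleGraph.mem_neighborSet, colorClass_adj, Finset.coe_filter,
        Set.mem_setOf_eq, Set.Finite.mem_toFinset, SimpleGraph.mem_neighborSet]
      constructor
      · rintro ⟨h, hcx⟩
        refine ⟨h, ?_⟩
        rw [hcol]; simp only [dif_pos h]; exact hcx
      · rintro ⟨h, hcx⟩
        refine ⟨h, ?_⟩
        rw [hcol] at hcx; simpa only [dif_pos h] using hcx
    have hdcard : ∀ (j : Fin r) (w : V),
        d j w = (((hNf w).toFinset).filter (fun x => col w x = j)).card := by
      intro j w
      show ((colorClass G c j).neighborSet w).ncard = _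
      rw [hfiber j w, Set.ncard_coe_finset]
    have hsum : ∀ w : V, ∑ j : Fin r, d j w = (G.neighborSet w).ncard := by
      intro w
      rw [Set.ncard_eq_toFinset_card _ (hNf w)]
      rw [Finset.card_eq_sum_card_fiberwise (f := col w) (fun x _ => Finset.mem_univ _)]
      refine Finset.sum_congr rfl fun j _ => ?_
      rw [hdcard j w]
    set bad : V → Finset (Fin r) := fun w => Finset.univ.filter (fun j => t - 1 ≤ d j w)
      with hbad
    have hbadcard : ∀ w : V, (G.neighborSet w).ncard < ((r + 1) / 2) * (t - 1) →
        (bad w).card < (r + 1) / 2 := by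
      intro w hw
      have h1 : (bad w).card * (t - 1) ≤ ∑ j ∈ bad w, d j w := by
        calc (bad w).card * (t - 1) = ∑ _j ∈ bad w, (t - 1) := by
              rw [Finset.sum_const, smul_eq_mul]
          _ ≤ ∑ j ∈ bad w, d j w := by
              refine Finset.sum_le_sum fun j hj => ?_
              simp only [hbad, Finset.mem_filter, Finset.mem_univ, true_and] at hj
              exact hj
      have h2 : ∑ j ∈ bad w, d j w ≤ ∑ j : Fin r, d j w :=
        Finset.sum_le_sum_of_subset (Finset.filter_subset _ _)
      have h3 : (bad w).card * (t - 1) < ((r + 1) / 2) * (t - 1) := by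
        rw [hsum w] at h2
        omega
      have ht1 : 0 < t - 1 := by omega
      exact Nat.lt_of_mul_lt_mul_right h3
    have hq : ((r + 1) / 2) * 2 ≤ r + 1 := Nat.div_mul_le_self _ _
    -- choose a color good at both u and v
    have hex : ∃ i : Fin r, d i u ≤ t - 2 ∧ d i v ≤ t - 2 := by
      by_contra hcon
      push_neg at hcon
      have hall : ∀ i : Fin r, i ∈ bad u ∪ bad v := by
        intro i
        simp only [hbad, Finset.mem_union, Finset.mem_filter, Finset.mem_univ, true_and]
        have := hcon i
        omega
      have : (Finset.univ : Finset (Fin r)).card ≤ (bad u ∪ bad v).card :=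
        Finset.card_le_card (fun i _ => hall i)
      rw [Finset.card_univ, Fintype.card_fin] at this
      have hbu := hbadcard u hu
      have hbv := hbadcard v hv
      have := Finset.card_union_le (bad u) (bad v)
      omega
    obtain ⟨i, hiu, hiv⟩ := hex
    simp only [hd] at hiu hiv
    -- the extended coloring
    set c' : G'.edgeSet → Fin r := fun e =>
      if h : (e : Sym2 V) ∈ G.edgeSet then c ⟨e, h⟩ else i with hc'
    have hsuv : s(u, v) ∉ G.edgeSet := by
      rw [SimpleGraph.mem_edgeSet]; exact hnadj
    have hclass : ∀ (j : Fin r) (x y : V), (colorClass G' c' j).Adj x y ↔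
        (colorClass G c j).Adj x y ∨ (j = i ∧ s(x, y) = s(u, v)) := by
      intro j x y
      rw [colorClass_adj, colorClass_adj]
      by_cases hG : G.Adj x y
      · have hxyne : s(x, y) ≠ s(u, v) := by
          intro h
          rw [Sym2.eq_iff] at h
          rcases h with ⟨rfl, rfl⟩ | ⟨rfl, rfl⟩
          · exact hnadj hG
          · exact hnadj hG.symm
        have hmem : s(x, y) ∈ G.edgeSet := hG
        constructor
        · rintro ⟨h', hcv⟩
          rw [hc'] at hcv
          simp only [dif_pos hmem] at hcv
          exact Or.inl ⟨hG, hcv⟩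
        · rintro (⟨h, hcv⟩ | ⟨rfl, habs⟩)
          · refine ⟨(hG'adj x y).2 (Or.inl hG), ?_⟩
            rw [hc']; simp only [dif_pos hmem]; exact hcv
          · exact absurd habs hxyne
      · constructor
        · rintro ⟨h', hcv⟩
          have heq : s(x, y) = s(u, v) := ((hG'adj x y).1 h').resolve_left hG
          have hnm : s(x, y) ∉ G.edgeSet := fun h => hG h
          rw [hc'] at hcv
          simp only [dif_neg hnm] at hcv
          exact Or.inr ⟨hcv.symm, heq⟩
        · rintro (⟨h, -⟩ | ⟨rfl, heq⟩)
          · exact absurd h hG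
          · refine ⟨(hG'adj x y).2 (Or.inr heq), ?_⟩
            have hnm : s(x, y) ∉ G.edgeSet := fun h => hG h
            rw [hc']; simp only [dif_neg hnm]
      -- done
    refine ⟨c', ?_, ?_⟩
    · rintro ⟨j, hcopy⟩
      rw [contains_star_iff] at hcopy
      obtain ⟨w, hw⟩ := hcopy
      by_cases hji : j = i
      · subst hji
        by_cases hwu : w = u
        · rw [hwu] at hw
          have hsub : (colorClass G' c' j).neighborSet u ⊆
              (colorClass G c j).neighborSet u ∪ {v} := by
            intro x hx
            rcases (hclass j u x).1 hx with h | ⟨-, heq⟩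
            · exact Or.inl h
            · exact Or.inr (Sym2.congr_right.1 heq)
          have := Set.ncard_le_ncard hsub (Set.toFinite _)
          have h2 := Set.ncard_union_le ((colorClass G c j).neighborSet u) {v}
          have h3 := hgood j u
          simp only [Set.ncard_singleton] at h2
          omega
        · by_cases hwv : w = v
          · rw [hwv] at hw
            have hsub : (colorClass G' c' j).neighborSet v ⊆
                (colorClass G c j).neighborSet v ∪ {u} := by
              intro x hx
              rcases (hclass j v x).1 hx with h | ⟨-, heq⟩
              · exact Or.inl h
              · rw [Sym2.eq_swap (a := u)] at heq
                exact Or.inr (Sym2.congr_right.1 heq)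
            have := Set.ncard_le_ncard hsub (Set.toFinite _)
            have h2 := Set.ncard_union_le ((colorClass G c j).neighborSet v) {u}
            have h3 := hgood j v
            simp only [Set.ncard_singleton] at h2
            omega
          · have hsub : (colorClass G' c' j).neighborSet w ⊆
                (colorClass G c j).neighborSet w := by
              intro x hx
              rcases (hclass j w x).1 hx with h | ⟨-, heq⟩
              · exact h
              · rw [Sym2.eq_iff] at heq
                rcases heq with ⟨rfl, rfl⟩ | ⟨rfl, rfl⟩
                · exact absurd rfl hwu
                · exact absurd rfl hwv
            have := Set.ncard_le_ncard hsub (Set.toFinite _)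
            have h3 := hgood j w
            omega
      · have hsub : (colorClass G' c' j).neighborSet w ⊆
            (colorClass G c j).neighborSet w := by
          intro x hx
          rcases (hclass j w x).1 hx with h | ⟨hji', -⟩
          · exact h
          · exact absurd hji' hji
        have := Set.ncard_le_ncard hsub (Set.toFinite _)
        have h3 := hgood j w
        omega
    · intro e he he'
      rw [hc']
      simp only [dif_pos he]
  -- build the injection
  have hle : ∀ (e : Sym2 V), e ∈ G.edgeSet → e ∈ G'.edgeSet := by
    intro e he
    exact SimpleGraph.edgeSet_mono le_sup_left he
  let Φ : {c : G.edgeSet → Fin r // ¬ HasMonoCopy G (_root_.starGraph t) c} →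
      {c : G'.edgeSet → Fin r // ¬ HasMonoCopy G' (_root_.starGraph t) c} :=
    fun p => ⟨(key p.1 p.2).choose, (key p.1 p.2).choose_spec.1⟩
  have hΦ : Function.Injective Φ := by
    rintro ⟨c₁, h₁⟩ ⟨c₂, h₂⟩ hp
    have hcc : (key c₁ h₁).choose = (key c₂ h₂).choose := congrArg Subtype.val hp
    ext ⟨e, he⟩
    have s₁ := (key c₁ h₁).choose_spec.2 e he (hle e he)
    have s₂ := (key c₂ h₂).choose_spec.2 e he (hle e he)
    have : c₁ ⟨e, he⟩ = c₂ ⟨e, he⟩ := by rw [← s₁, ← s₂, hcc]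
    exact congrArg Fin.val this
  exact Nat.card_le_card_of_injective Φ hΦ
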